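/- For every n ∈ ℕ and every convex set A ⊂ ℝ with |A| = n, there exists a matching M ⊂ A × A with |M| ≥ ⌊n/2⌋ such that the set A +_M A = {a + b : (a,b) ∈ M} is convex. -/
import Mathlib


/-- A finite set `S = {s_1 < ... < s_m} ⊂ ℝ` is convex if its consecutive differences
are strictly increasing. -/
def ConvexFinset (S : Finset ℝ) : Prop :=
  ∀ i : ℕ, ∀ h : i + 2 < S.card,
    (S.orderIsoOfFin rfl ⟨i + 2, h⟩ : ℝ) - (S.orderIsoOfFin rfl ⟨i + 1, by omega⟩ : ℝ) >
    (S.orderIsoOfFin rfl ⟨i + 1, by omega⟩ : ℝ) - (S.orderIsoOfFin rfl ⟨i, by omega⟩ : ℝ)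

/-- `M ⊆ A × A` is a matching if each element of `A` occurs in at most one coordinate of
at most one pair of `M`. -/
def IsMatching (A : Finset ℝ) (M : Finset (ℝ × ℝ)) : Prop :=
  (∀ p ∈ M, p.1 ∈ A ∧ p.2 ∈ A ∧ p.1 ≠ p.2) ∧
  (∀ p ∈ M, ∀ q ∈ M, p ≠ q → p.1 ≠ q.1 ∧ p.1 ≠ q.2 ∧ p.2 ≠ q.1 ∧ p.2 ≠ q.2)

/-- for every `n` and every convex `A ⊂ ℝ` with `|A| = n`, there is a
matching `M ⊆ A × A` with `|M| ≥ ⌊n/2⌋` such that `A +_M A = {a + b : (a,b) ∈ M}` is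
convex. -/
theorem statement16 (n : ℕ) (A : Finset ℝ) (hcard : A.card = n) (hconv : ConvexFinset A) :
    ∃ M : Finset (ℝ × ℝ), IsMatching A M ∧ n / 2 ≤ M.card ∧
      ConvexFinset (M.image (fun p => p.1 + p.2)) := by
  subst hcard
  set e : Fin A.card ↪o ℝ := A.orderEmbOfFin rfl with he
  have hmem : ∀ i, e i ∈ A := fun i => A.orderEmbOfFin_mem rfl i
  have einj : Function.Injective e := e.injective
  have estrict : StrictMono e := e.strictMono
  have hne : ∀ (a b : Fin A.card), (a : ℕ) ≠ b → e a ≠ e b := by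
    intro a b hab h
    exact hab (congrArg Fin.val (einj h))
  -- E : ℕ → ℝ version
  set E : ℕ → ℝ := fun j => if h : j < A.card then e ⟨j, h⟩ else 0 with hE
  have hEeq : ∀ (j : ℕ) (h : j < A.card), E j = e ⟨j, h⟩ := by
    intro j h; simp [hE, h]
  have hd : ∀ i : ℕ, i + 2 < A.card → E (i + 2) - E (i + 1) > E (i + 1) - E i := by
    intro i h
    have := hconv i h
    simp only [Finset.coe_orderIsoOfFin_apply] at this
    rw [hEeq (i+2) h, hEeq (i+1) (by omega), hEeq i (by omega)]
    exact this
  set m := A.card / 2 with hm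
  set f : Fin m → ℝ × ℝ := fun i => (e ⟨2 * i, by omega⟩, e ⟨2 * i + 1, by omega⟩) with hf
  have hfinj : Function.Injective f := by
    intro i j hij
    have h1 := congrArg Prod.fst hij
    simp only [hf] at h1
    have h2 := congrArg Fin.val (einj h1)
    simp only at h2
    exact Fin.ext (by omega)
  refine ⟨Finset.univ.image f, ⟨?_, ?_⟩, ?_, ?_⟩
  · intro p hp
    obtain ⟨i, _, rfl⟩ := Finset.mem_image.1 hp
    exact ⟨hmem _, hmem _, hne _ _ (by simp only [Fin.val_mk]; omega)⟩
  · intro p hp q hq hpq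
    obtain ⟨i, _, rfl⟩ := Finset.mem_image.1 hp
    obtain ⟨j, _, rfl⟩ := Finset.mem_image.1 hq
    have hij : i ≠ j := fun h => hpq (by rw [h])
    have hij' : (i : ℕ) ≠ j := fun h => hij (Fin.ext h)
    exact ⟨hne _ _ (by simp only [Fin.val_mk]; omega), hne _ _ (by simp only [Fin.val_mk]; omega),
      hne _ _ (by simp only [Fin.val_mk]; omega), hne _ _ (by simp only [Fin.val_mk]; omega)⟩
  · rw [Finset.card_image_of_injective _ hfinj, Finset.card_univ, Fintype.card_fin]
  · -- convexity of the sum set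
    set s : Fin m → ℝ := fun i => E (2 * i) + E (2 * i + 1) with hs
    have hsf : ∀ i : Fin m, s i = (f i).1 + (f i).2 := by
      intro i
      simp only [hs, hf]
      rw [hEeq (2*i) (by omega), hEeq (2*i+1) (by omega)]
    have hsmono : StrictMono s := by
      intro i j hij
      have h1 : (2 * (i:ℕ)) < 2 * (j:ℕ) := by omega
      simp only [hs]
      rw [hEeq (2*i) (by omega), hEeq (2*i+1) (by omega),
          hEeq (2*j) (by omega), hEeq (2*j+1) (by omega)]
      have := estrict (show (⟨2*i, by omega⟩ : Fin A.card) < ⟨2*j, by omega⟩ by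
        exact Fin.mk_lt_mk.2 h1)
      have := estrict (show (⟨2*i+1, by omega⟩ : Fin A.card) < ⟨2*j+1, by omega⟩ by
        exact Fin.mk_lt_mk.2 (by omega))
      linarith
    have hT : (Finset.univ.image f).image (fun p : ℝ × ℝ => p.1 + p.2)
        = Finset.univ.image s := by
      rw [Finset.image_image]
      apply Finset.image_congr
      intro i _
      exact (hsf i).symm
    rw [hT]
    set T := Finset.univ.image s with hTdef
    have hTcard : T.card = m := by
      rw [hTdef, Finset.card_image_of_injective _ hsmono.injective,
        Finset.card_univ, Fintype.card_fin]
    have hkey : (fun j : Fin T.card => s (Fin.cast hTcard j)) = T.orderEmbOfFin rfl := by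
      apply Finset.orderEmbOfFin_unique
      · intro x
        exact Finset.mem_image.2 ⟨_, Finset.mem_univ _, rfl⟩
      · exact hsmono.comp (fun a b hab => hab)
    intro k hk
    have hkm : k + 2 < m := by rwa [hTcard] at hk
    simp only [Finset.coe_orderIsoOfFin_apply]
    rw [← hkey]
    simp only [hs, Fin.cast, Fin.val_mk]
    rw [show 2 * (k + 2) = 2*k+4 from by omega, show 2 * (k + 1) = 2*k+2 from by omega,
        show 2*k+4+1 = 2*k+5 from by omega, show 2*k+2+1 = 2*k+3 from by omega]
    have h1 := hd (2*k) (by omega)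
    have h2 := hd (2*k+1) (by omega)
    have h3 := hd (2*k+2) (by omega)
    have h4 := hd (2*k+3) (by omega)
    rw [show 2*k+1+2 = 2*k+3 from by omega, show 2*k+1+1 = 2*k+2 from by omega] at h2
    rw [show 2*k+2+2 = 2*k+4 from by omega, show 2*k+2+1 = 2*k+3 from by omega] at h3
    rw [show 2*k+3+2 = 2*k+5 from by omega, show 2*k+3+1 = 2*k+4 from by omega] at h4
    linarith
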